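/- Let G be a dense additive subgroup of ℝ containing ℤ, 𝔾 = G ∩ [0,1) with addition modulo 1. Then for every integer n ≥ 2, the index [𝔾 : n𝔾] satisfies [𝔾 : n𝔾] ≤ [G : nG] ≤ n·[𝔾 : n𝔾]. -/
import Mathlib

/-- The multiplication-by-`n` endomorphism of an additive commutative group. -/
def smulHom (A : Type*) [AddCommGroup A] (n : ℕ) : A →+ A :=
  AddMonoidHom.mk' (fun a => n • a) (fun a b => smul_add n a b)

/-- For a dense additive subgroup `G` of `ℝ` containing `ℤ`, with `𝔾 = G ∩ [0,1)`
realized as the image `H` of `G` in `ℝ/ℤ = AddCircle 1`, one has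
`[𝔾 : n𝔾] ≤ [G : nG] ≤ n·[𝔾 : n𝔾]` as cardinals. -/
theorem stmt_6 (G : AddSubgroup ℝ) (hdense : Dense (G : Set ℝ))
    (hZ : ∀ k : ℤ, (k : ℝ) ∈ G) (n : ℕ) (hn : 2 ≤ n) :
    ∀ H : AddSubgroup (AddCircle (1:ℝ)),
      H = G.map (QuotientAddGroup.mk' (AddSubgroup.zmultiples (1:ℝ))) →
      Cardinal.mk (H ⧸ ((H.map (smulHom (AddCircle (1:ℝ)) n)).addSubgroupOf H))
          ≤ Cardinal.mk (G ⧸ ((G.map (smulHom ℝ n)).addSubgroupOf G)) ∧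
      Cardinal.mk (G ⧸ ((G.map (smulHom ℝ n)).addSubgroupOf G))
          ≤ n * Cardinal.mk (H ⧸ ((H.map (smulHom (AddCircle (1:ℝ)) n)).addSubgroupOf H)) := by
  intro H hH
  subst hH
  set p : ℝ →+ AddCircle (1:ℝ) := QuotientAddGroup.mk' (AddSubgroup.zmultiples (1:ℝ)) with hp
  set H : AddSubgroup (AddCircle (1:ℝ)) := G.map p with hHdef
  set nG : AddSubgroup G := (G.map (smulHom ℝ n)).addSubgroupOf G with hnG
  set nH : AddSubgroup H := (H.map (smulHom (AddCircle (1:ℝ)) n)).addSubgroupOf H with hnH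
  have hmem : ∀ x : G, p x ∈ H := fun x => AddSubgroup.mem_map_of_mem p x.2
  set π : G →+ H := (p.comp G.subtype).codRestrict H (fun x => hmem x) with hπ
  have hπsurj : Function.Surjective π := by
    rintro ⟨h, g, hg, rfl⟩
    exact ⟨⟨g, hg⟩, rfl⟩
  set φ : G →+ H ⧸ nH := (QuotientAddGroup.mk' nH).comp π with hφ
  have hφsurj : Function.Surjective φ :=
    (QuotientAddGroup.mk'_surjective nH).comp hπsurj
  have hker : ∀ x ∈ nG, φ x = 0 := by
    rintro x hx
    rcases hx with ⟨g, hg, hgx⟩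
    have hgx' : (n : ℕ) • g = (x : ℝ) := hgx
    rw [hφ]
    simp only [AddMonoidHom.comp_apply, QuotientAddGroup.mk'_apply]
    rw [QuotientAddGroup.eq_zero_iff]
    refine ⟨p g, ⟨g, hg, rfl⟩, ?_⟩
    show (n : ℕ) • (p g) = p (x : ℝ)
    rw [← hgx', map_nsmul]
  set φbar : G ⧸ nG →+ H ⧸ nH := QuotientAddGroup.lift nG φ hker with hφbar
  have hφbarsurj : Function.Surjective φbar := by
    intro y
    obtain ⟨x, hx⟩ := hφsurj y
    exact ⟨QuotientAddGroup.mk x, hx⟩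
  constructor
  · exact Cardinal.mk_le_of_surjective hφbarsurj
  · have e1 : (G ⧸ nG) ≃ ((G ⧸ nG) ⧸ φbar.ker) × φbar.ker :=
      AddSubgroup.addGroupEquivQuotientProdAddSubgroup
    have e2 : ((G ⧸ nG) ⧸ φbar.ker) ≃ (H ⧸ nH) :=
      (QuotientAddGroup.quotientKerEquivOfSurjective φbar hφbarsurj).toEquiv
    have hkercard : Cardinal.mk φbar.ker ≤ n := by
      have hsurj : Function.Surjective (fun i : Fin n =>
          (⟨QuotientAddGroup.mk ⟨(((i : ℕ) : ℤ) : ℝ), hZ ((i : ℕ) : ℤ)⟩, by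
            rw [AddMonoidHom.mem_ker]
            show φ _ = 0
            rw [hφ]
            simp only [AddMonoidHom.comp_apply, QuotientAddGroup.mk'_apply]
            rw [QuotientAddGroup.eq_zero_iff]
            have hz : π ⟨(((i : ℕ) : ℤ) : ℝ), hZ ((i : ℕ) : ℤ)⟩ = 0 := by
              apply Subtype.ext
              show p ((((i : ℕ) : ℤ)) : ℝ) = 0
              rw [hp, QuotientAddGroup.mk'_apply, QuotientAddGroup.eq_zero_iff]
              exact ⟨((i : ℕ) : ℤ), by simp⟩
            rw [hz]
            exact zero_mem _⟩ : φbar.ker)) := by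
        rintro ⟨k, hk⟩
        obtain ⟨x, rfl⟩ := QuotientAddGroup.mk_surjective k
        rw [AddMonoidHom.mem_ker] at hk
        have hφx : φ x = 0 := hk
        rw [hφ] at hφx
        simp only [AddMonoidHom.comp_apply, QuotientAddGroup.mk'_apply] at hφx
        rw [QuotientAddGroup.eq_zero_iff] at hφx
        rcases hφx with ⟨h', hh', heq⟩
        rcases hh' with ⟨g', hg', rfl⟩
        have heq2 : (n : ℕ) • p (g' : ℝ) = p (x : ℝ) := heq
        have heq3 : (QuotientAddGroup.mk ((x : ℝ)) :
            ℝ ⧸ AddSubgroup.zmultiples (1:ℝ)) = QuotientAddGroup.mk ((n : ℕ) • g') := by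
          rw [← map_nsmul] at heq2
          exact heq2.symm
        rw [QuotientAddGroup.eq] at heq3
        rcases heq3 with ⟨m, hm⟩
        have hm' : (m : ℝ) = -(x : ℝ) + (n : ℕ) * g' := by
          simpa [zsmul_eq_mul, nsmul_eq_mul] using hm
        set q : ℤ := (-m) / n with hq
        set r : ℤ := (-m) % n with hr
        have hn0 : (0:ℤ) < (n:ℤ) := by exact_mod_cast Nat.lt_of_lt_of_le two_pos hn
        have hr0 : 0 ≤ r := Int.emod_nonneg _ (by omega)
        have hrn : r < n := Int.emod_lt_of_pos _ hn0
        have hmqr : (n:ℤ) * q + r = -m := Int.mul_ediv_add_emod _ _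
        refine ⟨⟨r.toNat, by omega⟩, ?_⟩
        apply Subtype.ext
        show QuotientAddGroup.mk _ = QuotientAddGroup.mk x
        rw [QuotientAddGroup.eq]
        rw [hnG, AddSubgroup.mem_addSubgroupOf, AddSubgroup.mem_map]
        refine ⟨(g' : ℝ) + (q : ℝ), G.add_mem hg' (hZ q), ?_⟩
        have lhs : (smulHom ℝ n) ((g' : ℝ) + (q : ℝ)) = (n : ℝ) * ((g' : ℝ) + (q : ℝ)) := by
          simp [smulHom, nsmul_eq_mul]
        rw [lhs]
        have hmr : ((n:ℤ) * q + r : ℝ) = (-m : ℝ) := by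
          exact_mod_cast congrArg (Int.cast : ℤ → ℝ) hmqr
        push_cast at hmr
        push_cast [Int.toNat_of_nonneg hr0]
        linarith [hm', hmr]
      calc Cardinal.mk φbar.ker ≤ Cardinal.mk (Fin n) := Cardinal.mk_le_of_surjective hsurj
        _ = n := by simp
    calc Cardinal.mk (G ⧸ nG) = Cardinal.mk (((G ⧸ nG) ⧸ φbar.ker) × φbar.ker) :=
          Cardinal.mk_congr e1
      _ = Cardinal.mk ((G ⧸ nG) ⧸ φbar.ker) * Cardinal.mk φbar.ker := by
          rw [Cardinal.mk_prod, Cardinal.lift_id, Cardinal.lift_id]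
      _ = Cardinal.mk (H ⧸ nH) * Cardinal.mk φbar.ker := by rw [Cardinal.mk_congr e2]
      _ ≤ Cardinal.mk (H ⧸ nH) * n := mul_le_mul_right hkercard _
      _ = n * Cardinal.mk (H ⧸ nH) := mul_comm _ _
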